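/- arXiv:2605.21020 — 3 statements merged into one kernel-verified Lean document; each statement's English description precedes it below -/
import Mathlib

section
/- Let N be a positive integer and P_T > 0 a real number. Define the MiLAC-achievable covariance set R_MiLAC = { W * Wᴴ : W ∈ ℂ^{N×N}, and there exists p ∈ ℝ^N with p_m ≥ 0 for all m, diag(p) − Wᴴ * W positive semidefinite, and ∑_m p_m ≤ P_T }. Then R_MiLAC equals the set { R ∈ ℂ^{N×N} : R positive semidefinite and trace(R) ≤ P_T }. -/
open Matrix
open scoped ComplexOrder

/-- Theorem 1 of the paper: the set of MiLAC-achievable transmit covariance matrices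
equals the set of PSD matrices with trace at most `P_T`. -/
theorem milac_covariance_set_eq_digital (N : ℕ) (hN : 0 < N) (P_T : ℝ) (hPT : 0 < P_T) :
    {R : Matrix (Fin N) (Fin N) ℂ |
        ∃ (W : Matrix (Fin N) (Fin N) ℂ) (p : Fin N → ℝ),
          (∀ m, 0 ≤ p m) ∧
          (Matrix.diagonal (fun m => (p m : ℂ)) - Wᴴ * W).PosSemidef ∧
          (∑ m, p m) ≤ P_T ∧ R = W * Wᴴ} =
      {R : Matrix (Fin N) (Fin N) ℂ | R.PosSemidef ∧ R.trace ≤ (P_T : ℂ)} := by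
  ext R
  simp only [Set.mem_setOf_eq]
  constructor
  · rintro ⟨W, p, hp, hpsd, hsum, rfl⟩
    refine ⟨posSemidef_self_mul_conjTranspose W, ?_⟩
    have h1 : ∀ m, (Wᴴ * W) m m ≤ (p m : ℂ) := by
      intro m
      have h0 : 0 ≤ (Matrix.diagonal (fun m => (p m : ℂ)) - Wᴴ * W) m m := by
        have := hpsd.2 (Finsupp.single m 1)
        simpa [Matrix.mulVec, dotProduct, Pi.single_apply, Finset.sum_ite_eq,
          Finset.sum_ite_eq'] using this
      have : ((Matrix.diagonal (fun m => (p m : ℂ)) - Wᴴ * W) m m)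
          = (p m : ℂ) - (Wᴴ * W) m m := by
        simp [Matrix.sub_apply]
      rw [this] at h0
      exact sub_nonneg.mp h0
    calc (W * Wᴴ).trace = (Wᴴ * W).trace := Matrix.trace_mul_comm W Wᴴ
      _ = ∑ m, (Wᴴ * W) m m := rfl
      _ ≤ ∑ m, ((p m : ℂ)) := Finset.sum_le_sum fun m _ => h1 m
      _ = ((∑ m, p m : ℝ) : ℂ) := by push_cast; ring
      _ ≤ (P_T : ℂ) := by exact_mod_cast hsum
  · rintro ⟨hR, htr⟩
    have hH := hR.isHermitian
    set U : Matrix (Fin N) (Fin N) ℂ := (hH.eigenvectorUnitary : Matrix (Fin N) (Fin N) ℂ)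
      with hUdef
    set D : Matrix (Fin N) (Fin N) ℂ := Matrix.diagonal (RCLike.ofReal ∘ hH.eigenvalues)
      with hDdef
    have hspec : R = U * D * star U := hH.spectral_theorem
    set sc : Fin N → ℂ := fun m => ((Real.sqrt (hH.eigenvalues m) : ℝ) : ℂ) with hscdef
    set W : Matrix (Fin N) (Fin N) ℂ := U * Matrix.diagonal sc with hWdef
    have hUU : star U * U = 1 := (Matrix.mem_unitaryGroup_iff').mp hH.eigenvectorUnitary.2
    have hUUr : U * star U = 1 := (Matrix.mem_unitaryGroup_iff).mp hH.eigenvectorUnitary.2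
    have hscstar : star sc = sc := by
      funext m
      simp [hscdef, Complex.conj_ofReal]
    have hWc : Wᴴ = Matrix.diagonal sc * star U := by
      rw [hWdef, Matrix.conjTranspose_mul, Matrix.diagonal_conjTranspose, hscstar, Matrix.star_eq_conjTranspose]
    have hD2 : Matrix.diagonal sc * Matrix.diagonal sc = D := by
      have hfun : (fun i => sc i * sc i) = RCLike.ofReal ∘ hH.eigenvalues := by
        funext m
        simp only [hscdef]
        rw [← Complex.ofReal_mul, Real.mul_self_sqrt (hR.eigenvalues_nonneg m)]
        rfl
      rw [Matrix.diagonal_mul_diagonal, hfun, hDdef]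
    have hWW : Wᴴ * W = D := by
      rw [hWc, hWdef, Matrix.mul_assoc, ← Matrix.mul_assoc (star U), hUU, Matrix.one_mul, hD2]
    have hWWH : W * Wᴴ = R := by
      rw [hWc, hWdef, Matrix.mul_assoc, ← Matrix.mul_assoc (Matrix.diagonal sc), hD2,
        ← Matrix.mul_assoc, ← hspec]
    have htrD : R.trace = ((∑ m, hH.eigenvalues m : ℝ) : ℂ) := by
      have h := congrArg Matrix.trace hspec
      rw [Matrix.trace_mul_comm, ← Matrix.mul_assoc, hUU, Matrix.one_mul, hDdef,
        Matrix.trace_diagonal] at h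
      rw [h]
      push_cast
      rfl
    refine ⟨W, hH.eigenvalues, fun m => hR.eigenvalues_nonneg m, ?_, ?_, hWWH.symm⟩
    · have hz : Matrix.diagonal (fun m => ((hH.eigenvalues m : ℝ) : ℂ)) - Wᴴ * W = 0 := by
        rw [hWW, hDdef, sub_eq_zero]
        rfl
      rw [hz]
      exact Matrix.PosSemidef.zero
    · rw [htrD] at htr
      exact_mod_cast htr
end

section
/- Let R ∈ ℂ^{N×N} be Hermitian positive definite with positive definite square root R^{1/2}, let Δ ∈ ℂ^{N×N}, and let R^{1/2} * Δ = U * Σ * Vᴴ be a singular value decomposition (U, V unitary, Σ diagonal with nonnegative real entries). Then X* = R^{1/2} * U * Vᴴ satisfies X* * X*ᴴ = R, and for every X ∈ ℂ^{N×N} with X * Xᴴ = R it holds that ‖X* − Δ‖_F ≤ ‖X − Δ‖_F. -/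
open Matrix
open scoped ComplexOrder

private lemma diag_star (N : ℕ) (σ : Fin N → ℝ) :
    (Matrix.diagonal (fun i => (σ i : ℂ)))ᴴ = Matrix.diagonal (fun i => (σ i : ℂ)) := by
  rw [Matrix.diagonal_conjTranspose]
  have h : (star fun i => (σ i : ℂ)) = fun i => (σ i : ℂ) :=
    funext fun i => Complex.conj_ofReal (σ i)
  rw [h]

/-- trace of the optimum's cross term -/
private lemma trace_opt (N : ℕ)
    (S Δ U V : Matrix (Fin N) (Fin N) ℂ) (σ : Fin N → ℝ)
    (hSH : Sᴴ = S)
    (hU : U ∈ Matrix.unitaryGroup (Fin N) ℂ)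
    (hV : V ∈ Matrix.unitaryGroup (Fin N) ℂ)
    (hSVD : S * Δ = U * Matrix.diagonal (fun i => (σ i : ℂ)) * Vᴴ) :
    ((S * (U * Vᴴ) * Δᴴ).trace).re = ∑ i, σ i := by
  have hVV : V * Vᴴ = 1 := by
    simpa [Matrix.star_eq_conjTranspose] using hV.2
  have hUU : Uᴴ * U = 1 := by
    simpa [Matrix.star_eq_conjTranspose] using hU.1
  have hDS : Δᴴ * S = V * Matrix.diagonal (fun i => (σ i : ℂ)) * Uᴴ := by
    have := congrArg Matrix.conjTranspose hSVD
    simp only [Matrix.conjTranspose_mul, hSH, Matrix.conjTranspose_conjTranspose,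
      diag_star] at this
    rw [this, Matrix.mul_assoc]
  have h1 : (S * (U * Vᴴ) * Δᴴ).trace
      = ((U * Vᴴ) * (Δᴴ * S)).trace := by
    rw [Matrix.mul_assoc, Matrix.trace_mul_comm, Matrix.mul_assoc]
  rw [h1, hDS]
  have h2 : U * Vᴴ * (V * Matrix.diagonal (fun i => (σ i : ℂ)) * Uᴴ)
      = U * Matrix.diagonal (fun i => (σ i : ℂ)) * Uᴴ := by
    rw [show U * Vᴴ * (V * Matrix.diagonal (fun i => (σ i : ℂ)) * Uᴴ)
        = U * (Vᴴ * V) * Matrix.diagonal (fun i => (σ i : ℂ)) * Uᴴ by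
      simp only [Matrix.mul_assoc]]
    have hVV' : Vᴴ * V = 1 := by
      simpa [Matrix.star_eq_conjTranspose] using hV.1
    rw [hVV', Matrix.mul_one]
  rw [h2, Matrix.trace_mul_comm, ← Matrix.mul_assoc, hUU, Matrix.one_mul]
  simp [Matrix.trace, Matrix.diag, Matrix.diagonal]

/-- Upper bound on the cross term for any feasible X. -/
private lemma trace_le (N : ℕ)
    (R S Δ U V : Matrix (Fin N) (Fin N) ℂ) (σ : Fin N → ℝ)
    (hS : S.PosDef) (hSS : S * S = R) (hσ : ∀ i, 0 ≤ σ i)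
    (hU : U ∈ Matrix.unitaryGroup (Fin N) ℂ)
    (hV : V ∈ Matrix.unitaryGroup (Fin N) ℂ)
    (hSVD : S * Δ = U * Matrix.diagonal (fun i => (σ i : ℂ)) * Vᴴ)
    (X : Matrix (Fin N) (Fin N) ℂ) (hX : X * Xᴴ = R) :
    ((X * Δᴴ).trace).re ≤ ∑ i, σ i := by
  have hSH : Sᴴ = S := hS.isHermitian
  have hdet : IsUnit S.det := isUnit_iff_ne_zero.mpr (ne_of_gt hS.det_pos)
  have hSinv : S * S⁻¹ = 1 := Matrix.mul_nonsing_inv S hdet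
  have hinvS : S⁻¹ * S = 1 := Matrix.nonsing_inv_mul S hdet
  have hSinvH : S⁻¹ᴴ = S⁻¹ := by
    rw [Matrix.conjTranspose_nonsing_inv, hSH]
  set Q := S⁻¹ * X with hQdef
  have hXQ : X = S * Q := by
    rw [hQdef, ← Matrix.mul_assoc, hSinv, Matrix.one_mul]
  have hQQ : Q * Qᴴ = 1 := by
    rw [hQdef, Matrix.conjTranspose_mul, hSinvH]
    calc S⁻¹ * X * (Xᴴ * S⁻¹) = S⁻¹ * (X * Xᴴ) * S⁻¹ := by
          simp only [Matrix.mul_assoc]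
      _ = S⁻¹ * (S * S) * S⁻¹ := by rw [hX, hSS]
      _ = (S⁻¹ * S) * (S * S⁻¹) := by simp only [Matrix.mul_assoc]
      _ = 1 := by rw [hinvS, hSinv, Matrix.one_mul]
  set W := Uᴴ * Q * V with hWdef
  have hVV : V * Vᴴ = 1 := by simpa [Matrix.star_eq_conjTranspose] using hV.2
  have hUU : U * Uᴴ = 1 := by simpa [Matrix.star_eq_conjTranspose] using hU.2
  have hUU' : Uᴴ * U = 1 := by simpa [Matrix.star_eq_conjTranspose] using hU.1
  have hWW : W * Wᴴ = 1 := by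
    rw [hWdef]
    simp only [Matrix.conjTranspose_mul, Matrix.conjTranspose_conjTranspose]
    calc Uᴴ * Q * V * (Vᴴ * (Qᴴ * U))
        = Uᴴ * (Q * (V * Vᴴ) * Qᴴ) * U := by simp only [Matrix.mul_assoc]
      _ = Uᴴ * (Q * Qᴴ) * U := by rw [hVV, Matrix.mul_one]
      _ = Uᴴ * U := by rw [hQQ, Matrix.mul_one]
      _ = 1 := hUU'
  -- trace computation
  have hDS : Δᴴ * S = V * Matrix.diagonal (fun i => (σ i : ℂ)) * Uᴴ := by
    have := congrArg Matrix.conjTranspose hSVD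
    simp only [Matrix.conjTranspose_mul, hSH, Matrix.conjTranspose_conjTranspose,
      diag_star] at this
    rw [this, Matrix.mul_assoc]
  have htr : (X * Δᴴ).trace = (W * Matrix.diagonal (fun i => (σ i : ℂ))).trace := by
    rw [hXQ]
    rw [Matrix.mul_assoc, Matrix.trace_mul_comm, Matrix.mul_assoc, hDS]
    rw [show Q * (V * Matrix.diagonal (fun i => (σ i : ℂ)) * Uᴴ)
        = (Q * V * Matrix.diagonal (fun i => (σ i : ℂ))) * Uᴴ by
      simp only [Matrix.mul_assoc]]
    rw [Matrix.trace_mul_comm, hWdef]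
    simp only [Matrix.mul_assoc]
  rw [htr]
  have hdiagW : ∀ i, (W i i).re ≤ 1 := by
    intro i
    have h1 : (W * Wᴴ) i i = 1 := by rw [hWW]; simp
    have h2 : ∑ j, Complex.normSq (W i j) = 1 := by
      have : (W * Wᴴ) i i = ∑ j, W i j * (starRingEnd ℂ) (W i j) := by
        simp [Matrix.mul_apply, Matrix.conjTranspose_apply]
      rw [this] at h1
      have := congrArg Complex.re h1
      simpa [Complex.mul_conj] using this
    have h3 : Complex.normSq (W i i) ≤ 1 := by
      rw [← h2]
      exact Finset.single_le_sum (fun j _ => Complex.normSq_nonneg _) (Finset.mem_univ i)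
    have h4 : (W i i).re ≤ ‖W i i‖ := Complex.re_le_norm _
    have h5 : ‖W i i‖ ≤ 1 := by
      have := Complex.sq_norm (W i i)
      nlinarith [norm_nonneg (W i i)]
    linarith
  have : (W * Matrix.diagonal (fun i => (σ i : ℂ))).trace = ∑ i, W i i * (σ i : ℂ) := by
    simp [Matrix.trace, Matrix.diag, Matrix.mul_diagonal]
  rw [this]
  rw [Complex.re_sum]
  apply Finset.sum_le_sum
  intro i _
  have : (W i i * (σ i : ℂ)).re = (W i i).re * σ i := by
    simp [Complex.mul_re]
  rw [this]
  nlinarith [hσ i, hdiagW i]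

/-- Expansion of the squared Frobenius distance. -/
private lemma expand_trace (N : ℕ)
    (R Δ X : Matrix (Fin N) (Fin N) ℂ) (hX : X * Xᴴ = R) :
    (((X - Δ) * (X - Δ)ᴴ).trace).re
      = (R.trace).re - 2 * ((X * Δᴴ).trace).re + ((Δ * Δᴴ).trace).re := by
  have h : (X - Δ) * (X - Δ)ᴴ = X * Xᴴ - X * Δᴴ - Δ * Xᴴ + Δ * Δᴴ := by
    rw [Matrix.conjTranspose_sub]
    rw [Matrix.sub_mul, Matrix.mul_sub, Matrix.mul_sub]
    abel
  rw [h, hX]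
  have hconj : (Δ * Xᴴ).trace = star ((X * Δᴴ).trace) := by
    rw [← Matrix.trace_conjTranspose]
    congr 1
    rw [Matrix.conjTranspose_mul, Matrix.conjTranspose_conjTranspose]
  simp only [Matrix.trace_add, Matrix.trace_sub, hconj]
  simp [Complex.add_re, Complex.sub_re]
  ring

/-- Closed-form solution of subproblem P7: for Hermitian positive definite `R`
with positive definite square root `S = R^{1/2}`, and an SVD `S Δ = U Σ Vᴴ`,
the matrix `X* = S U Vᴴ` satisfies `X* X*ᴴ = R` and minimizes the Frobenius
distance to `Δ` over `{X : X Xᴴ = R}`. -/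
theorem pdd_subproblem_closed_form (N : ℕ)
    (R S Δ U V : Matrix (Fin N) (Fin N) ℂ) (σ : Fin N → ℝ)
    (hR : R.PosDef) (hS : S.PosDef) (hSS : S * S = R)
    (hσ : ∀ i, 0 ≤ σ i)
    (hU : U ∈ Matrix.unitaryGroup (Fin N) ℂ)
    (hV : V ∈ Matrix.unitaryGroup (Fin N) ℂ)
    (hSVD : S * Δ = U * Matrix.diagonal (fun i => (σ i : ℂ)) * Vᴴ) :
    (S * (U * Vᴴ)) * (S * (U * Vᴴ))ᴴ = R ∧
    (∀ X : Matrix (Fin N) (Fin N) ℂ, X * Xᴴ = R →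
      (((S * (U * Vᴴ) - Δ) * (S * (U * Vᴴ) - Δ)ᴴ).trace).re
        ≤ (((X - Δ) * (X - Δ)ᴴ).trace).re) := by
  have hSH : Sᴴ = S := hS.isHermitian
  have hVV' : Vᴴ * V = 1 := by simpa [Matrix.star_eq_conjTranspose] using hV.1
  have hUU : U * Uᴴ = 1 := by simpa [Matrix.star_eq_conjTranspose] using hU.2
  have hfeas : (S * (U * Vᴴ)) * (S * (U * Vᴴ))ᴴ = R := by
    simp only [Matrix.conjTranspose_mul, Matrix.conjTranspose_conjTranspose, hSH]
    calc S * (U * Vᴴ) * (V * Uᴴ * S)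
        = S * (U * ((Vᴴ * V) * Uᴴ)) * S := by simp only [Matrix.mul_assoc]
      _ = S * (U * Uᴴ) * S := by rw [hVV']; simp only [Matrix.one_mul]
      _ = S * S := by rw [hUU, Matrix.mul_one]
      _ = R := hSS
  refine ⟨hfeas, fun X hX => ?_⟩
  rw [expand_trace N R Δ X hX, expand_trace N R Δ (S * (U * Vᴴ)) hfeas]
  have h1 : (((S * (U * Vᴴ)) * Δᴴ).trace).re = ∑ i, σ i :=
    trace_opt N S Δ U V σ hSH hU hV hSVD
  have h2 : ((X * Δᴴ).trace).re ≤ ∑ i, σ i :=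
    trace_le N R S Δ U V σ hS hSS hσ hU hV hSVD X hX
  rw [h1]
  linarith
end

section
/- Let N_x, N_y be positive integers, N = N_x N_y, and let F_DFT ∈ ℂ^{N×N} be the normalized 2D DFT matrix. Consider the feasible set of receiver-side MiLAC transfer matrices V = (1/2)·[Θ]_{N+1:2N, 1:N} where Θ ∈ ℂ^{2N×2N} ranges over all matrices with Θᵀ = Θ and Θᴴ Θ = I. Then the minimum over this feasible set and over scaling factors β ∈ ℂ of ‖β·V − F_DFT‖_F² equals 0, and it is attained at V = (1/2)·F_DFT, β = 2, with Θ = [[0, F_DFTᵀ],[F_DFT, 0]]. -/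
open Matrix

private lemma geom_aux (n : ℕ) (hn : 0 < n) (j k : ℕ) (hj : j < n) (hk : k < n) :
    ∑ t ∈ Finset.range n,
      Complex.exp (2 * (Real.pi : ℂ) * Complex.I * ((j : ℂ) - (k : ℂ)) / (n : ℂ)) ^ t
      = if j = k then (n : ℂ) else 0 := by
  have hn' : (n : ℂ) ≠ 0 := Nat.cast_ne_zero.mpr hn.ne'
  by_cases h : j = k
  · simp [h, sub_self]
  · rw [if_neg h]
    set z := Complex.exp (2 * (Real.pi : ℂ) * Complex.I * ((j : ℂ) - (k : ℂ)) / (n : ℂ)) with hz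
    have hzn : z ^ n = 1 := by
      rw [hz, ← Complex.exp_nat_mul]
      have : (n : ℂ) * (2 * (Real.pi : ℂ) * Complex.I * ((j : ℂ) - (k : ℂ)) / (n : ℂ))
          = ((j : ℤ) - (k : ℤ) : ℤ) * (2 * (Real.pi : ℂ) * Complex.I) := by
        push_cast
        field_simp
      rw [this, Complex.exp_int_mul_two_pi_mul_I]
    have hz1 : z ≠ 1 := by
      intro hz1
      rw [hz, Complex.exp_eq_one_iff] at hz1
      obtain ⟨m, hm⟩ := hz1
      have hpi : (Real.pi : ℂ) ≠ 0 := Complex.ofReal_ne_zero.mpr Real.pi_ne_zero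
      have hne : (2 * (Real.pi : ℂ) * Complex.I) ≠ 0 := by
        simp [hpi, Complex.I_ne_zero]
      have hm' : (2 * (Real.pi : ℂ) * Complex.I) * ((j : ℂ) - (k : ℂ))
          = (2 * (Real.pi : ℂ) * Complex.I) * ((m : ℂ) * (n : ℂ)) := by
        field_simp at hm
        linear_combination (2 * (Real.pi : ℂ) * Complex.I) * hm
      have hjk : ((j : ℤ) - (k : ℤ) : ℂ) = ((m * n : ℤ) : ℂ) := by
        push_cast
        exact mul_left_cancel₀ hne hm'
      have hjk' : (j : ℤ) - (k : ℤ) = m * n := by exact_mod_cast hjk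
      have hdvd : (n : ℤ) ∣ ((j : ℤ) - (k : ℤ)) := ⟨m, by linarith [hjk']⟩
      have habs : |(j : ℤ) - (k : ℤ)| < (n : ℤ) := by
        rw [abs_sub_lt_iff]
        omega
      have := Int.eq_zero_of_abs_lt_dvd hdvd habs
      exact h (by omega)
    rw [geom_sum_eq hz1, hzn]
    simp

private lemma sum_range_mul' {M : Type*} [AddCommMonoid M] (m n : ℕ) (f : ℕ → M) :
    ∑ k ∈ Finset.range (m * n), f k
      = ∑ a ∈ Finset.range m, ∑ b ∈ Finset.range n, f (a + m * b) := by
  rw [← Finset.sum_product']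
  refine Finset.sum_nbij' (fun k => (k % m, k / m)) (fun p => p.1 + m * p.2) ?_ ?_ ?_ ?_ ?_
  · intro k hk
    simp only [Finset.mem_range] at hk
    have hm : 0 < m := by
      rcases Nat.eq_zero_or_pos m with h | h
      · subst h; simp at hk
      · exact h
    simp only [Finset.mem_product, Finset.mem_range]
    exact ⟨Nat.mod_lt _ hm, Nat.div_lt_of_lt_mul (by omega)⟩
  · intro p hp
    simp only [Finset.mem_product, Finset.mem_range] at hp ⊢
    obtain ⟨h1, h2⟩ := hp
    calc p.1 + m * p.2 < m + m * p.2 := by omega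
      _ ≤ m + m * (n - 1) := by
          have : p.2 ≤ n - 1 := by omega
          exact Nat.add_le_add_left (Nat.mul_le_mul_left _ this) _
      _ ≤ m * n := by
          rcases n with _ | n
          · omega
          · simp [Nat.mul_succ, Nat.succ_sub_one]; ring_nf; omega
  · intro k hk
    simp [Nat.mod_add_div]
  · intro p hp
    simp only [Finset.mem_product, Finset.mem_range] at hp
    have hm : 0 < m := by omega
    ext
    · simp [Nat.add_mul_mod_self_left, Nat.mod_eq_of_lt hp.1]
    · simp [Nat.add_mul_div_left _ _ hm, Nat.div_eq_of_lt hp.1]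
  · intro k hk
    simp [Nat.mod_add_div]

/-- Receiver-side MiLAC design (problem P12): over lossless (`Θᴴ Θ = I`) and
reciprocal (`Θᵀ = Θ`) scattering matrices with transfer matrix
`V = (1/2)[Θ]_{N+1:2N,1:N}` and scalings `β ∈ ℂ`, the minimum of
`‖β V − F_DFT‖_F²` is `0`, attained at `V = (1/2) F_DFT`, `β = 2`, with
`Θ = [[0, F_DFTᵀ],[F_DFT, 0]]`. -/
theorem receiver_milac_exact_2d_dft (Nx Ny : ℕ) (hx : 0 < Nx) (hy : 0 < Ny)
    (F : Matrix (Fin (Nx * Ny)) (Fin (Nx * Ny)) ℂ)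
    (hF : ∀ n n' : Fin (Nx * Ny),
      F n n' = (1 / (Real.sqrt (Nx * Ny) : ℂ)) *
        Complex.exp (-2 * (Real.pi : ℂ) * Complex.I *
          (((n : ℕ) % Nx : ℕ) : ℂ) * (((n' : ℕ) % Nx : ℕ) : ℂ) / (Nx : ℂ)) *
        Complex.exp (-2 * (Real.pi : ℂ) * Complex.I *
          (((n : ℕ) / Nx : ℕ) : ℂ) * (((n' : ℕ) / Nx : ℕ) : ℂ) / (Ny : ℂ))) :
    IsLeast
      {c : ℝ |
        ∃ (Θ : Matrix (Fin (Nx * Ny) ⊕ Fin (Nx * Ny)) (Fin (Nx * Ny) ⊕ Fin (Nx * Ny)) ℂ)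
          (β : ℂ), Θᵀ = Θ ∧ Θᴴ * Θ = 1 ∧
          c = (((β • ((1 / 2 : ℂ) • Θ.toBlocks₂₁) - F) *
                (β • ((1 / 2 : ℂ) • Θ.toBlocks₂₁) - F)ᴴ).trace).re} 0 ∧
    (Matrix.fromBlocks 0 Fᵀ F 0)ᵀ = Matrix.fromBlocks (0 : Matrix (Fin (Nx * Ny)) (Fin (Nx * Ny)) ℂ) Fᵀ F 0 ∧
    (Matrix.fromBlocks (0 : Matrix (Fin (Nx * Ny)) (Fin (Nx * Ny)) ℂ) Fᵀ F 0)ᴴ *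
        Matrix.fromBlocks (0 : Matrix (Fin (Nx * Ny)) (Fin (Nx * Ny)) ℂ) Fᵀ F 0 = 1 ∧
    ((((2 : ℂ) • ((1 / 2 : ℂ) •
          (Matrix.fromBlocks (0 : Matrix (Fin (Nx * Ny)) (Fin (Nx * Ny)) ℂ) Fᵀ F 0).toBlocks₂₁) - F) *
        ((2 : ℂ) • ((1 / 2 : ℂ) •
          (Matrix.fromBlocks (0 : Matrix (Fin (Nx * Ny)) (Fin (Nx * Ny)) ℂ) Fᵀ F 0).toBlocks₂₁) - F)ᴴ).trace).re
      = 0 := by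
  have hNx : (Nx : ℂ) ≠ 0 := Nat.cast_ne_zero.mpr hx.ne'
  have hNy : (Ny : ℂ) ≠ 0 := Nat.cast_ne_zero.mpr hy.ne'
  have hN : 0 < Nx * Ny := Nat.mul_pos hx hy
  have hNr : (0 : ℝ) ≤ (Nx : ℝ) * (Ny : ℝ) := by positivity
  -- unitarity of F
  have hFF : Fᴴ * F = 1 := by
    ext m m'
    rw [Matrix.mul_apply]
    simp only [Matrix.conjTranspose_apply]
    set z1 := Complex.exp (2 * (Real.pi : ℂ) * Complex.I *
      ((((m : ℕ) % Nx : ℕ) : ℂ) - (((m' : ℕ) % Nx : ℕ) : ℂ)) / (Nx : ℂ)) with hz1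
    set z2 := Complex.exp (2 * (Real.pi : ℂ) * Complex.I *
      ((((m : ℕ) / Nx : ℕ) : ℂ) - (((m' : ℕ) / Nx : ℕ) : ℂ)) / (Ny : ℂ)) with hz2
    have entry : ∀ n : Fin (Nx * Ny),
        star (F n m) * F n m'
          = (1 / ((Nx * Ny : ℕ) : ℂ)) * z1 ^ ((n : ℕ) % Nx) * z2 ^ ((n : ℕ) / Nx) := by
      intro n
      rw [hF n m, hF n m', hz1, hz2, ← Complex.exp_nat_mul, ← Complex.exp_nat_mul]
      simp only [Complex.star_def, ← Complex.exp_conj, _root_.map_mul, map_div₀,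
        _root_.map_one, map_neg, map_ofNat, Complex.conj_I, Complex.conj_natCast,
        Complex.conj_ofReal]
      have hsq : ((Real.sqrt ((Nx : ℝ) * (Ny : ℝ)) : ℝ) : ℂ) *
          ((Real.sqrt ((Nx : ℝ) * (Ny : ℝ)) : ℝ) : ℂ) = ((Nx * Ny : ℕ) : ℂ) := by
        rw [← Complex.ofReal_mul, Real.mul_self_sqrt hNr]
        push_cast
        ring
      have hc : (1 / ((Real.sqrt ((Nx : ℝ) * (Ny : ℝ)) : ℝ) : ℂ)) *
          (1 / ((Real.sqrt ((Nx : ℝ) * (Ny : ℝ)) : ℝ) : ℂ)) = 1 / ((Nx * Ny : ℕ) : ℂ) := by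
        rw [div_mul_div_comm, one_mul, hsq]
      have key : ∀ (c a b x y : ℂ), c * Complex.exp a * Complex.exp b *
          (c * Complex.exp x * Complex.exp y)
          = c * c * Complex.exp (a + x + (b + y)) := by
        intro c a b x y
        rw [Complex.exp_add, Complex.exp_add, Complex.exp_add]
        ring
      rw [key, hc]
      conv_rhs => rw [mul_assoc, ← Complex.exp_add]
      congr 1
      field_simp
      ring
    rw [Finset.sum_congr rfl (fun n _ => entry n)]
    have hsum : ∑ n : Fin (Nx * Ny),
        (1 / ((Nx * Ny : ℕ) : ℂ)) * z1 ^ ((n : ℕ) % Nx) * z2 ^ ((n : ℕ) / Nx)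
        = ∑ k ∈ Finset.range (Nx * Ny),
            (1 / ((Nx * Ny : ℕ) : ℂ)) * z1 ^ (k % Nx) * z2 ^ (k / Nx) :=
      Fin.sum_univ_eq_sum_range (fun k => (1 / ((Nx * Ny : ℕ) : ℂ)) * z1 ^ (k % Nx) * z2 ^ (k / Nx)) _
    rw [hsum, sum_range_mul' Nx Ny]
    have hsimp : ∀ a ∈ Finset.range Nx, ∀ b ∈ Finset.range Ny,
        (1 / ((Nx * Ny : ℕ) : ℂ)) * z1 ^ ((a + Nx * b) % Nx) * z2 ^ ((a + Nx * b) / Nx)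
          = (1 / ((Nx * Ny : ℕ) : ℂ)) * (z1 ^ a * z2 ^ b) := by
      intro a ha b hb
      simp only [Finset.mem_range] at ha hb
      rw [Nat.add_mul_mod_self_left, Nat.mod_eq_of_lt ha,
        Nat.add_mul_div_left _ _ hx, Nat.div_eq_of_lt ha, Nat.zero_add, mul_assoc]
    rw [Finset.sum_congr rfl (fun a ha => Finset.sum_congr rfl (fun b hb => hsimp a ha b hb))]
    have hfact : ∑ a ∈ Finset.range Nx, ∑ b ∈ Finset.range Ny,
        (1 / ((Nx * Ny : ℕ) : ℂ)) * (z1 ^ a * z2 ^ b)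
        = (1 / ((Nx * Ny : ℕ) : ℂ)) *
            ((∑ a ∈ Finset.range Nx, z1 ^ a) * (∑ b ∈ Finset.range Ny, z2 ^ b)) := by
      rw [Finset.sum_mul_sum, Finset.mul_sum]
      exact Finset.sum_congr rfl fun a _ => by rw [Finset.mul_sum]
    rw [hfact]
    have h1 := geom_aux Nx hx ((m : ℕ) % Nx) ((m' : ℕ) % Nx)
      (Nat.mod_lt _ hx) (Nat.mod_lt _ hx)
    have h2 := geom_aux Ny hy ((m : ℕ) / Nx) ((m' : ℕ) / Nx)
      (Nat.div_lt_of_lt_mul m.isLt) (Nat.div_lt_of_lt_mul m'.isLt)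
    rw [← hz1] at h1
    rw [← hz2] at h2
    rw [h1, h2]
    by_cases hmm : m = m'
    · subst hmm
      rw [if_pos rfl, if_pos rfl, Matrix.one_apply_eq]
      push_cast
      field_simp
    · rw [Matrix.one_apply_ne hmm]
      have : ¬((m : ℕ) % Nx = (m' : ℕ) % Nx ∧ (m : ℕ) / Nx = (m' : ℕ) / Nx) := by
        intro ⟨h1', h2'⟩
        apply hmm
        apply Fin.ext
        rw [← Nat.div_add_mod (m : ℕ) Nx, ← Nat.div_add_mod (m' : ℕ) Nx, h1', h2']
      rcases not_and_or.mp this with h | h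
      · rw [if_neg h]; ring
      · rw [if_neg h]; ring
  have hFFt : F * Fᴴ = 1 := mul_eq_one_comm.mp hFF
  -- symmetry of Θ
  have hsym : (Matrix.fromBlocks 0 Fᵀ F 0)ᵀ
      = Matrix.fromBlocks (0 : Matrix (Fin (Nx * Ny)) (Fin (Nx * Ny)) ℂ) Fᵀ F 0 := by
    simp [Matrix.fromBlocks_transpose]
  -- unitarity of Θ
  have huni : (Matrix.fromBlocks (0 : Matrix (Fin (Nx * Ny)) (Fin (Nx * Ny)) ℂ) Fᵀ F 0)ᴴ *
      Matrix.fromBlocks (0 : Matrix (Fin (Nx * Ny)) (Fin (Nx * Ny)) ℂ) Fᵀ F 0 = 1 := by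
    rw [Matrix.fromBlocks_conjTranspose, Matrix.fromBlocks_multiply]
    simp only [Matrix.conjTranspose_zero, Matrix.zero_mul, Matrix.mul_zero, add_zero, zero_add]
    rw [hFF]
    have hct : Fᴴᵀ = Fᵀᴴ := by
      ext i j
      simp [Matrix.conjTranspose_apply, Matrix.transpose_apply]
    have : Fᵀᴴ * Fᵀ = 1 := by
      rw [← hct, ← Matrix.transpose_mul, hFFt, Matrix.transpose_one]
    rw [this, ← Matrix.fromBlocks_one]
  -- the value at the optimum is zero
  have hzero : ((((2 : ℂ) • ((1 / 2 : ℂ) •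
          (Matrix.fromBlocks (0 : Matrix (Fin (Nx * Ny)) (Fin (Nx * Ny)) ℂ) Fᵀ F 0).toBlocks₂₁) - F) *
        ((2 : ℂ) • ((1 / 2 : ℂ) •
          (Matrix.fromBlocks (0 : Matrix (Fin (Nx * Ny)) (Fin (Nx * Ny)) ℂ) Fᵀ F 0).toBlocks₂₁) - F)ᴴ).trace).re
      = 0 := by
    rw [Matrix.toBlocks_fromBlocks₂₁, smul_smul]
    norm_num
  refine ⟨⟨⟨Matrix.fromBlocks 0 Fᵀ F 0, 2, hsym, huni, hzero.symm⟩, ?_⟩, hsym, huni, hzero⟩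
  -- lower bound
  rintro c ⟨Θ, β, -, -, rfl⟩
  set M := β • ((1 / 2 : ℂ) • Θ.toBlocks₂₁) - F with hM
  have : ((M * Mᴴ).trace)
      = ((∑ i, ∑ j, Complex.normSq (M i j) : ℝ) : ℂ) := by
    rw [Matrix.trace]
    push_cast
    refine Finset.sum_congr rfl fun i _ => ?_
    rw [Matrix.diag_apply, Matrix.mul_apply]
    refine Finset.sum_congr rfl fun j _ => ?_
    rw [Matrix.conjTranspose_apply]
    exact Complex.mul_conj _
  rw [this, Complex.ofReal_re]
  exact Finset.sum_nonneg fun i _ => Finset.sum_nonneg fun j _ => Complex.normSq_nonneg _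
end
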